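/- Let (M,d) be an unbounded separable metric space containing a curve γ : [0,∞) → M with d(γ(0), γ(t)) → ∞, μ a Borel probability measure on M, and ρ : [0,∞) → [0,∞) non-decreasing continuous with ρ(0)=0, ρ ≢ 0 and U := lim_{t→∞} ρ(t) < ∞. If F(m) = ∫ ρ(d(x,m)) dμ(x) is finite for all m, then F is not constant; in particular there exists p ∈ M with F(p) < U. -/

import Mathlib

open MeasureTheory Set Filter

/-- Non-constancy of the objective (bounded loss): in an unbounded separable metric space
with an escaping curve, for a non-decreasing continuous loss `ρ` with `ρ(0) = 0`, `ρ ≢ 0`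
and finite limit `U = lim_{t→∞} ρ(t)`, the objective `F` is not constant; in particular
there exists `p` with `F(p) < U`. -/
theorem objective_not_constant_bounded
    {M : Type*} [MetricSpace M] [TopologicalSpace.SeparableSpace M]
    [MeasurableSpace M] [BorelSpace M]
    (μ : Measure M) [IsProbabilityMeasure μ]
    (γ : ℝ → M)
    (hγ : Tendsto (fun t => dist (γ 0) (γ t)) atTop atTop)
    (ρ : ℝ → ℝ) (U : ℝ)
    (hmono : MonotoneOn ρ (Ici 0))
    (hcont : ContinuousOn ρ (Ici 0))
    (hρ0 : ρ 0 = 0)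
    (hρnonneg : ∀ t ∈ Ici (0:ℝ), 0 ≤ ρ t)
    (hρnotzero : ∃ t ∈ Ici (0:ℝ), ρ t ≠ 0)
    (hU : Tendsto ρ atTop (nhds U))
    (F : M → ℝ)
    (hF : ∀ m, F m = ∫ x, ρ (dist x m) ∂μ)
    (hint : ∀ m : M, Integrable (fun x => ρ (dist x m)) μ) :
    (¬ ∀ m m' : M, F m = F m') ∧ ∃ p : M, F p < U := by
  -- ρ ≤ U on [0, ∞)
  have hle : ∀ t : ℝ, 0 ≤ t → ρ t ≤ U := by
    intro t ht
    refine ge_of_tendsto hU ?_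
    filter_upwards [eventually_ge_atTop t] with s hs
    exact hmono ht (ht.trans hs) hs
  -- U > 0
  have hUpos : 0 < U := by
    obtain ⟨t, ht, htne⟩ := hρnotzero
    have := hρnonneg t ht
    have h1 : 0 < ρ t := lt_of_le_of_ne this (Ne.symm htne)
    exact h1.trans_le (hle t ht)
  -- δ with ρ < U/2 on [0, δ)
  have hcont0 : Tendsto ρ (nhdsWithin 0 (Ici 0)) (nhds 0) := by
    have := hcont 0 (mem_Ici.2 le_rfl)
    simpa [ContinuousWithinAt, hρ0] using this
  have hev : ∀ᶠ t in nhdsWithin (0:ℝ) (Ici 0), ρ t < U / 2 := by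
    have : Iio (U/2) ∈ nhds (0:ℝ) := Iio_mem_nhds (by linarith)
    exact hcont0 (by exact this)
  obtain ⟨δ, hδpos, hδ⟩ := Metric.mem_nhdsWithin_iff.1 hev
  -- a ball of radius δ with positive measure
  obtain ⟨D, hDc, hDd⟩ := TopologicalSpace.exists_countable_dense M
  have hcover : (⋃ p ∈ D, Metric.ball p δ) = univ := by
    ext x
    simp only [mem_iUnion, mem_univ, iff_true]
    obtain ⟨p, hp, hpd⟩ := hDd.exists_dist_lt x hδpos
    exact ⟨p, hp, by simpa [Metric.mem_ball, dist_comm] using hpd⟩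
  have hpos : ∃ p : M, 0 < μ (Metric.ball p δ) := by
    by_contra h
    push_neg at h
    have hz : ∀ p ∈ D, μ (Metric.ball p δ) = 0 := fun p _ => le_antisymm (h p) bot_le
    have : μ (⋃ p ∈ D, Metric.ball p δ) = 0 := measure_biUnion_null_iff hDc |>.2 hz
    rw [hcover] at this
    simp [measure_univ] at this
  obtain ⟨p, hppos⟩ := hpos
  set B := Metric.ball p δ with hB
  -- F p < U
  have hFpU : F p < U := by
    have hbound : ∀ x : M, ρ (dist x p) ≤ U - (U/2) * B.indicator (fun _ => (1:ℝ)) x := by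
      intro x
      by_cases hx : x ∈ B
      · have hd : dist x p ∈ Metric.ball (0:ℝ) δ ∩ Ici 0 := by
          constructor
          · simpa [Real.dist_eq, abs_of_nonneg dist_nonneg] using (show dist x p < δ from hx)
          · exact dist_nonneg
        have := hδ hd
        simp only [mem_setOf_eq] at this
        rw [indicator_of_mem hx]
        linarith
      · rw [indicator_of_notMem hx]
        have := hle _ (dist_nonneg (x := x) (y := p))
        linarith
    have hintg : Integrable (fun x => U - (U/2) * B.indicator (fun _ => (1:ℝ)) x) μ := by
      apply Integrable.sub (integrable_const U)
      exact ((integrable_indicator_iff Metric.isOpen_ball.measurableSet).2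
        (integrableOn_const (measure_lt_top μ B).ne)).const_mul _
    have h1 : F p ≤ ∫ x, (U - (U/2) * B.indicator (fun _ => (1:ℝ)) x) ∂μ := by
      rw [hF p]
      exact integral_mono (hint p) hintg hbound
    have h2 : ∫ x, (U - (U/2) * B.indicator (fun _ => (1:ℝ)) x) ∂μ
        = U - (U/2) * (μ B).toReal := by
      rw [integral_sub (integrable_const U)
        (((integrable_indicator_iff Metric.isOpen_ball.measurableSet).2
          (integrableOn_const (measure_lt_top μ B).ne)).const_mul _),
        integral_const, integral_const_mul, integral_indicator Metric.isOpen_ball.measurableSet]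
      simp [measure_univ, Measure.real, hB]
    have h3 : 0 < (μ B).toReal :=
      ENNReal.toReal_pos hppos.ne' (measure_lt_top μ B).ne
    rw [h2] at h1
    nlinarith
  refine ⟨?_, p, hFpU⟩
  -- not constant
  intro hconst
  -- F (γ t) → U by dominated convergence
  have hdist : ∀ x : M, Tendsto (fun t => dist x (γ t)) atTop atTop := by
    intro x
    apply tendsto_atTop_mono (f := fun t => dist (γ 0) (γ t) - dist (γ 0) x)
    · intro t
      have h1 := dist_triangle (γ 0) x (γ t)
      have h2 : dist x (γ t) = dist (γ t) x := dist_comm _ _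
      linarith
    · simpa [sub_eq_add_neg] using tendsto_atTop_add_const_right atTop (-(dist (γ 0) x)) hγ
  have htend : Tendsto (fun t => F (γ t)) atTop (nhds U) := by
    have : Tendsto (fun t => ∫ x, ρ (dist x (γ t)) ∂μ) atTop (nhds (∫ _, U ∂μ)) := by
      apply tendsto_integral_filter_of_dominated_convergence (fun _ => U)
      · filter_upwards with t
        exact (hint (γ t)).aestronglyMeasurable
      · filter_upwards with t
        filter_upwards with x
        rw [Real.norm_eq_abs, abs_of_nonneg (hρnonneg _ dist_nonneg)]
        exact hle _ dist_nonneg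
      · exact integrable_const U
      · filter_upwards with x
        exact hU.comp (hdist x)
    have hc : (∫ _ : M, U ∂μ) = U := by simp [measure_univ]
    rw [hc] at this
    exact this.congr (fun t => (hF (γ t)).symm)
  have hcc : Tendsto (fun _ : ℝ => F (γ 0)) atTop (nhds U) :=
    htend.congr (fun t => hconst (γ t) (γ 0))
  have : U = F (γ 0) := tendsto_nhds_unique hcc tendsto_const_nhds
  have := hconst p (γ 0)
  linarith
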